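/- Let (G,·) be a group and define the binary operation a ⊙ b = a²ba⁻¹ on G. Then (G,⊙) is a gyrogroup if and only if G is central by a 2-Engel group, i.e. if and only if ⁅⁅x,y⁆,y⁆ ∈ Z(G) for all x,y ∈ G. Here '(G,⊙) is a gyrogroup' means: there exists a family of maps gyr[a,b] : G → G (a,b ∈ G) such that (i) there is e ∈ G with e ⊙ a = a for all a; (ii) for every a ∈ G there is a' ∈ G with a' ⊙ a = e; (iii) each gyr[a,b] is a bijection of G satisfying gyr[a,b](x ⊙ y) = gyr[a,b](x) ⊙ gyr[a,b](y) for all x,y, and a ⊙ (b ⊙ c) = (a ⊙ b) ⊙ gyr[a,b](c) for all a,b,c; (iv) gyr[a ⊙ b, b] = gyr[a,b] for all a,b. -/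

import Mathlib

open scoped commutatorElement

/-- The gyrogroup operation `a ⊙ b = a² b a⁻¹` associated to a group. -/
def gyroOp {G : Type*} [Group G] (a b : G) : G := a ^ 2 * b * a⁻¹

/-- `(G, ⊙)` with `a ⊙ b = a² b a⁻¹` is a gyrogroup if and only if
`G` is central by a 2-Engel group, i.e. `⁅⁅x,y⁆,y⁆ ∈ Z(G)` for all `x, y`. -/
theorem gyroOp_gyrogroup_iff_central_by_two_engel (G : Type*) [Group G] :
    (∃ e : G, ∃ gyr : G → G → G → G,
      (∀ a : G, gyroOp e a = a) ∧
      (∀ a : G, ∃ a' : G, gyroOp a' a = e) ∧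
      (∀ a b : G, Function.Bijective (gyr a b)) ∧
      (∀ a b x y : G, gyr a b (gyroOp x y) = gyroOp (gyr a b x) (gyr a b y)) ∧
      (∀ a b c : G, gyroOp a (gyroOp b c) = gyroOp (gyroOp a b) (gyr a b c)) ∧
      (∀ a b : G, gyr (gyroOp a b) b = gyr a b)) ↔
    (∀ x y : G, ⁅⁅x, y⁆, y⁆ ∈ Subgroup.center G) := by
  constructor
  · rintro ⟨e, gyr, _h1, _h2, _h3, _h4, h5, h6⟩
    -- From gyroassociativity, `gyr a b` is forced to be conjugation by `a * b⁻¹ * a⁻¹ * b`.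
    have key : ∀ a b c : G,
        gyr a b c = a * b⁻¹ * a⁻¹ * b * c * (a * b⁻¹ * a⁻¹ * b)⁻¹ := by
      intro a b c
      have h := h5 a b c
      simp only [gyroOp] at h
      have e : gyr a b c =
          ((a ^ 2 * b * a⁻¹) ^ 2)⁻¹ *
            ((a ^ 2 * b * a⁻¹) ^ 2 * gyr a b c * (a ^ 2 * b * a⁻¹)⁻¹) *
            (a ^ 2 * b * a⁻¹) := by group
      rw [e, ← h]
      simp only [pow_two]
      group
    -- From the loop property, the quotient of the two conjugators is central.
    have hq : ∀ a b z : G,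
        (a * b⁻¹ * a⁻¹ * b)⁻¹ *
            (gyroOp a b * b⁻¹ * (gyroOp a b)⁻¹ * b) * z =
          z * ((a * b⁻¹ * a⁻¹ * b)⁻¹ *
            (gyroOp a b * b⁻¹ * (gyroOp a b)⁻¹ * b)) := by
      intro a b z
      have h := congrFun (h6 a b) z
      rw [key (gyroOp a b) b z, key a b z] at h
      have e1 : (a * b⁻¹ * a⁻¹ * b)⁻¹ *
            (gyroOp a b * b⁻¹ * (gyroOp a b)⁻¹ * b) * z =
          (a * b⁻¹ * a⁻¹ * b)⁻¹ *
            (gyroOp a b * b⁻¹ * (gyroOp a b)⁻¹ * b * z *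
              (gyroOp a b * b⁻¹ * (gyroOp a b)⁻¹ * b)⁻¹) *
            (gyroOp a b * b⁻¹ * (gyroOp a b)⁻¹ * b) := by group
      rw [e1, h]
      group
    intro x y
    rw [Subgroup.mem_center_iff]
    intro z
    have h := hq x y ((y⁻¹ * x) * z * (y⁻¹ * x)⁻¹)
    have e1 : z * ⁅⁅x, y⁆, y⁆ =
        (⁅⁅x, y⁆, y⁆ * (y⁻¹ * x)⁻¹) *
          ((x * y⁻¹ * x⁻¹ * y)⁻¹ *
              (gyroOp x y * y⁻¹ * (gyroOp x y)⁻¹ * y) *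
            ((y⁻¹ * x) * z * (y⁻¹ * x)⁻¹)) *
          ((y⁻¹ * x) * ⁅⁅x, y⁆, y⁆) := by
      simp only [commutatorElement_def, gyroOp]
      group
    rw [e1, h]
    simp only [commutatorElement_def, gyroOp]
    group
  · intro hE
    refine ⟨1, fun a b c => a * b⁻¹ * a⁻¹ * b * c * (a * b⁻¹ * a⁻¹ * b)⁻¹,
      ?_, ?_, ?_, ?_, ?_, ?_⟩
    · intro a; simp [gyroOp]
    · intro a
      refine ⟨a⁻¹, ?_⟩
      simp only [gyroOp]
      group
    · intro a b
      constructor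
      · intro u v h
        exact mul_left_cancel (mul_right_cancel h)
      · intro c
        exact ⟨(a * b⁻¹ * a⁻¹ * b)⁻¹ * c * (a * b⁻¹ * a⁻¹ * b), by group⟩
    · intro a b x y
      simp only [gyroOp, pow_two]
      group
    · intro a b c
      simp only [gyroOp, pow_two]
      group
    · intro a b
      funext c
      dsimp only
      have hK := Subgroup.mem_center_iff.mp (hE a b)
      have hK2 : ∀ t : G, ⁅⁅a, b⁆, b⁆⁻¹ * t * ⁅⁅a, b⁆, b⁆ = t := by
        intro t
        rw [mul_assoc, hK t, inv_mul_cancel_left]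
      have e1 : gyroOp a b * b⁻¹ * (gyroOp a b)⁻¹ * b * c *
            (gyroOp a b * b⁻¹ * (gyroOp a b)⁻¹ * b)⁻¹ =
          (a * b⁻¹ * a⁻¹ * b) *
            ((b⁻¹ * a) *
              (⁅⁅a, b⁆, b⁆⁻¹ * ((b⁻¹ * a)⁻¹ * c * (b⁻¹ * a)) * ⁅⁅a, b⁆, b⁆) *
              (b⁻¹ * a)⁻¹) *
            (a * b⁻¹ * a⁻¹ * b)⁻¹ := by
        simp only [commutatorElement_def, gyroOp, pow_two]
        group
        simp only [pow_two, zpow_two, mul_assoc]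
      rw [e1, hK2 ((b⁻¹ * a)⁻¹ * c * (b⁻¹ * a))]
      group
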